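/- Let G be a finite group, N ⊴ G, and x, y ∈ N with gcd(|x^G|,|y^G|) = 1, d(x^G, y^G) ≥ 3 in Γ_G(N), and |x^G| > |y^G|. If x and y are commuting p-elements and z = y^g ≠ y for some g ∈ G, then w = z·y^{-1} is a nontrivial p-element commuting with y, and p divides |x^G|. -/

import Mathlib

open Pointwise

/-- The `G`-conjugacy class of `x`. -/
def classSet {G : Type*} [Group G] (x : G) : Set G := {y | IsConj x y}

/-- The size of the `G`-conjugacy class of `x`. -/
noncomputable def classSize {G : Type*} [Group G] (x : G) : ℕ := Nat.card (classSet x)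

/-- The graph `Γ_G(N)` on the noncentral elements of `N` (each `G`-class blown up to a
clique of mutually conjugate elements, which does not affect distances between distinct
classes nor connectedness): two vertices are adjacent iff their `G`-class sizes are not
coprime. -/
noncomputable def classGraph (G : Type*) [Group G] (N : Subgroup G) :
    SimpleGraph {x : G // x ∈ N ∧ x ∉ Subgroup.center G} where
  Adj a b := a ≠ b ∧ ¬ Nat.Coprime (classSize a.1) (classSize b.1)
  symm := ⟨fun a b hab => ⟨hab.1.symm, fun hco => hab.2 hco.symm⟩⟩
  loopless := ⟨fun a ha => ha.1 rfl⟩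

theorem mem_classSet_iff {G : Type*} [Group G] {x u : G} :
    u ∈ classSet x ↔ ∃ c, c * x * c⁻¹ = u := by
  rw [classSet, Set.mem_setOf_eq, isConj_iff]

theorem classSet_eq_orbit {G : Type*} [Group G] (x : G) :
    classSet x = MulAction.orbit (ConjAct G) x := by
  ext u; rw [ConjAct.mem_orbit_conjAct, isConj_comm]; rfl

theorem classSize_eq_index {G : Type*} [Group G] [Finite G] (x : G) :
    classSize x = (Subgroup.centralizer {x}).index := by
  have h1 : classSize x = (MulAction.stabilizer (ConjAct G) x).index := by
    rw [classSize, classSet_eq_orbit, Subgroup.index,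
      Nat.card_congr (MulAction.orbitEquivQuotientStabilizer (ConjAct G) x)]
  rw [h1, Subgroup.centralizer_eq_comap_stabilizer]
  exact (Subgroup.index_comap_of_surjective _ (MulEquiv.surjective _)).symm

theorem orderOf_dvd_card_of_invariant {G : Type*} [Group G] [Finite G] (X : Set G) (w : G)
    (h : ∀ v ∈ X, v * w ∈ X) : orderOf w ∣ Nat.card X := by
  set Z := Subgroup.zpowers w with hZ
  have hnat : ∀ v ∈ X, ∀ n : ℕ, v * w ^ n ∈ X := by
    intro v hv n
    induction n with
    | zero => simpa using hv
    | succ k ih => rw [pow_succ, ← mul_assoc]; exact h _ ih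
  have hsat : X = (QuotientGroup.mk : G → G ⧸ Z) ⁻¹' (QuotientGroup.mk '' X) := by
    apply Set.Subset.antisymm (Set.subset_preimage_image _ _)
    rintro v' hv'
    obtain ⟨v, hv, hq⟩ := hv'
    rw [QuotientGroup.eq] at hq
    have : v⁻¹ * v' ∈ Z := hq
    rw [hZ, ← mem_powers_iff_mem_zpowers] at this
    obtain ⟨n, hn⟩ := (Submonoid.mem_powers_iff _ _).mp this
    have : v' = v * w ^ n := by rw [hn]; group
    rw [this]; exact hnat v hv n
  set Y : Set (G ⧸ Z) := QuotientGroup.mk '' X with hY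
  rw [hsat, Nat.card_congr (QuotientGroup.preimageMkEquivSubgroupProdSet Z Y),
    Nat.card_prod, ← Nat.card_zpowers w]
  exact Dvd.intro _ rfl

theorem index_inf_eq_mul {G : Type*} [Group G] [Finite G] (H K : Subgroup G)
    (hco : Nat.Coprime H.index K.index) : (H ⊓ K).index = H.index * K.index := by
  refine Nat.le_antisymm Subgroup.index_inf_le (Nat.le_of_dvd ?_ ?_)
  · exact Nat.pos_of_ne_zero (H ⊓ K).index_ne_zero_of_finite
  · exact hco.mul_dvd_of_dvd_of_dvd (Subgroup.index_dvd_of_le inf_le_left)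
      (Subgroup.index_dvd_of_le inf_le_right)

theorem exists_mul_decomp {G : Type*} [Group G] [Finite G] (H K : Subgroup G)
    (hco : Nat.Coprime H.index K.index) (g : G) : ∃ a ∈ H, ∃ b ∈ K, g = a * b := by
  have hrel : K.relIndex H * H.index = H.index * K.index := by
    rw [← Subgroup.inf_relIndex_left,
      Subgroup.relIndex_mul_index (inf_le_left : H ⊓ K ≤ H), index_inf_eq_mul H K hco]
  have hrel' : K.relIndex H = K.index :=
    Nat.eq_of_mul_eq_mul_right (Nat.pos_of_ne_zero H.index_ne_zero_of_finite)
      (by rw [hrel, Nat.mul_comm])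
  let φ : H ⧸ K.subgroupOf H → G ⧸ K :=
    Quotient.map' Subtype.val (by
      intro a b hab
      rw [QuotientGroup.leftRel_apply] at hab ⊢
      exact hab)
  have hinj : Function.Injective φ := by
    intro q1 q2
    induction q1 using Quotient.inductionOn'
    induction q2 using Quotient.inductionOn'
    intro hq
    have : (QuotientGroup.mk _ : G ⧸ K) = QuotientGroup.mk _ := hq
    rw [QuotientGroup.eq] at this
    apply Quotient.sound'
    rw [QuotientGroup.leftRel_apply]
    exact this
  have hcard : Nat.card (H ⧸ K.subgroupOf H) = Nat.card (G ⧸ K) := by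
    have h0 : Nat.card (H ⧸ K.subgroupOf H) = K.relIndex H := rfl
    rw [h0, hrel']; rfl
  have hsurj : Function.Surjective φ :=
    ((Nat.bijective_iff_injective_and_card φ).mpr ⟨hinj, hcard⟩).surjective
  obtain ⟨q, hq⟩ := hsurj (QuotientGroup.mk g)
  induction q using Quotient.inductionOn' with | h a =>
  have : (QuotientGroup.mk (a : G) : G ⧸ K) = QuotientGroup.mk g := hq
  rw [QuotientGroup.eq] at this
  exact ⟨a, a.2, (a : G)⁻¹ * g, this, by group⟩

theorem stmt19 {G : Type*} [Group G] [Finite G] (N : Subgroup G) (hN : N.Normal)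
    (p : ℕ) (hp : p.Prime) (x y : G)
    (hx : x ∈ N ∧ x ∉ Subgroup.center G) (hy : y ∈ N ∧ y ∉ Subgroup.center G)
    (hco : Nat.Coprime (classSize x) (classSize y))
    -- `d(x^G, y^G) ≥ 3` in `Γ_G(N)`: not adjacent and no common neighbour
    (hdist : ¬ (classGraph G N).Adj ⟨x, hx⟩ ⟨y, hy⟩ ∧
      ∀ w, ¬ ((classGraph G N).Adj ⟨x, hx⟩ w ∧ (classGraph G N).Adj w ⟨y, hy⟩))
    (hsize : classSize y < classSize x)
    (hcomm : Commute x y)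
    (hxp : ∃ a : ℕ, orderOf x = p ^ a) (hyp : ∃ b : ℕ, orderOf y = p ^ b)
    (g z : G) (hz : z = g * y * g⁻¹) (hzy : z ≠ y) :
    z * y⁻¹ ≠ 1 ∧ (∃ n : ℕ, orderOf (z * y⁻¹) = p ^ n) ∧
    Commute (z * y⁻¹) y ∧ p ∣ classSize x := by
  classical
  set Cx := Subgroup.centralizer {x} with hCx
  set Cy := Subgroup.centralizer {y} with hCy
  have hXi : classSize x = Cx.index := classSize_eq_index x
  have hYi : classSize y = Cy.index := classSize_eq_index y
  have hcoI : Nat.Coprime Cx.index Cy.index := by rwa [hXi, hYi] at hco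
  have hYpos : 0 < classSize y := by
    rw [hYi]; exact Nat.pos_of_ne_zero Cy.index_ne_zero_of_finite
  -- every conjugate of y is an `a`-conjugate with `a ∈ Cx`, and symmetrically
  have hclassY : ∀ v ∈ classSet y, ∃ a ∈ Cx, a * y * a⁻¹ = v := by
    intro v hv
    obtain ⟨h, hh⟩ := mem_classSet_iff.mp hv
    obtain ⟨a, ha, b, hb, hab⟩ := exists_mul_decomp Cx Cy hcoI h
    refine ⟨a, ha, ?_⟩
    rw [hCy] at hb
    have hby : b * y = y * b := Subgroup.mem_centralizer_singleton_iff.mp hb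
    rw [← hh, hab]
    calc a * y * a⁻¹ = a * (b * y * b⁻¹) * a⁻¹ := by
          rw [hby]; group
      _ = a * b * y * (a * b)⁻¹ := by group
  have hclassX : ∀ u ∈ classSet x, ∃ b ∈ Cy, b * x * b⁻¹ = u := by
    intro u hu
    obtain ⟨h, hh⟩ := mem_classSet_iff.mp hu
    obtain ⟨b, hb, a, ha, hab⟩ := exists_mul_decomp Cy Cx hcoI.symm h
    refine ⟨b, hb, ?_⟩
    rw [hCx] at ha
    have hax : a * x = x * a := Subgroup.mem_centralizer_singleton_iff.mp ha
    rw [← hh, hab]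
    calc b * x * b⁻¹ = b * (a * x * a⁻¹) * b⁻¹ := by
          rw [hax]; group
      _ = b * a * x * (b * a)⁻¹ := by group
  -- every element of the class of x commutes with y
  have hXcomm : ∀ u ∈ classSet x, Commute u y := by
    intro u hu
    obtain ⟨b, hb, hbu⟩ := hclassX u hu
    rw [hCy] at hb
    have hby : Commute b y := Subgroup.mem_centralizer_singleton_iff.mp hb
    rw [← hbu]
    exact ((hby.symm.mul_right hcomm.symm).mul_right hby.symm.inv_right).symm
  -- products of class elements land in the class of x*y
  have hXYt : ∀ u ∈ classSet x, ∀ v ∈ classSet y, u * v ∈ classSet (x * y) := by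
    intro u hu v hv
    obtain ⟨h, hh⟩ := mem_classSet_iff.mp hu
    have hv' : h⁻¹ * v * h ∈ classSet y := by
      obtain ⟨c, hc⟩ := mem_classSet_iff.mp hv
      exact mem_classSet_iff.mpr ⟨h⁻¹ * c, by rw [← hc]; group⟩
    obtain ⟨a, ha, hav⟩ := hclassY _ hv'
    rw [hCx] at ha
    have hax : a * x = x * a := Subgroup.mem_centralizer_singleton_iff.mp ha
    refine mem_classSet_iff.mpr ⟨h * a, ?_⟩
    have hveq : v = h * (a * y * a⁻¹) * h⁻¹ := by
      rw [hav]; group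
    have hkey : a * (x * y) * a⁻¹ = x * (a * y * a⁻¹) := by
      calc a * (x * y) * a⁻¹ = (a * x) * y * a⁻¹ := by group
        _ = (x * a) * y * a⁻¹ := by rw [hax]
        _ = x * (a * y * a⁻¹) := by group
    calc h * a * (x * y) * (h * a)⁻¹
        = h * (a * (x * y) * a⁻¹) * h⁻¹ := by group
      _ = h * (x * (a * y * a⁻¹)) * h⁻¹ := by rw [hkey]
      _ = (h * x * h⁻¹) * (h * (a * y * a⁻¹) * h⁻¹) := by group
      _ = u * v := by rw [hh, ← hveq]
  have hyY : y ∈ classSet y := mem_classSet_iff.mpr ⟨1, by group⟩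
  have hxX : x ∈ classSet x := mem_classSet_iff.mpr ⟨1, by group⟩
  -- the image of the class of x under right multiplication by y
  set A : Set G := (· * y) '' classSet x with hA
  have hAsub : A ⊆ classSet (x * y) := by
    rintro - ⟨u, hu, rfl⟩
    exact hXYt u hu y hyY
  have hAcard : A.ncard = classSize x := by
    rw [hA, Set.ncard_image_of_injective _ (mul_left_injective y), classSize,
      Nat.card_coe_set_eq]
  have htge : classSize x ≤ classSize (x * y) := by
    rw [← hAcard, classSize, Nat.card_coe_set_eq]
    exact Set.ncard_le_ncard hAsub (Set.toFinite _)
  -- class size of x*y divides |X||Y|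
  have hinfle : Cx ⊓ Cy ≤ Subgroup.centralizer {x * y} := by
    intro c hc
    obtain ⟨hc1, hc2⟩ := Subgroup.mem_inf.mp hc
    rw [hCx] at hc1
    rw [hCy] at hc2
    have hcx : c * x = x * c := Subgroup.mem_centralizer_singleton_iff.mp hc1
    have hcy : c * y = y * c := Subgroup.mem_centralizer_singleton_iff.mp hc2
    refine Subgroup.mem_centralizer_singleton_iff.mpr ?_
    calc c * (x * y) = c * x * y := by group
      _ = x * c * y := by rw [hcx]
      _ = x * (c * y) := by group
      _ = x * (y * c) := by rw [hcy]
      _ = x * y * c := by group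
  have htdvd : classSize (x * y) ∣ classSize x * classSize y := by
    rw [classSize_eq_index, hXi, hYi, ← index_inf_eq_mul Cx Cy hcoI]
    exact Subgroup.index_dvd_of_le hinfle
  -- x*y is a vertex of the graph
  have hy1 : y ≠ 1 := fun h => hy.2 (h ▸ Subgroup.one_mem _)
  have hx1 : x ≠ 1 := fun h => hx.2 (h ▸ Subgroup.one_mem _)
  have ht1 : x * y ∈ N := N.mul_mem hx.1 hy.1
  have ht2 : x * y ∉ Subgroup.center G := by
    intro hc
    have hle : Cy ≤ Cx := by
      intro c hc'
      rw [hCy] at hc'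
      have hcy : c * y = y * c := Subgroup.mem_centralizer_singleton_iff.mp hc'
      rw [hCx]
      refine Subgroup.mem_centralizer_singleton_iff.mpr ?_
      have h1 : c * x * y = x * c * y := by
        calc c * x * y = c * (x * y) := by group
          _ = x * y * c := Subgroup.mem_center_iff.mp hc c
          _ = x * (y * c) := by group
          _ = x * (c * y) := by rw [← hcy]
          _ = x * c * y := by group
      exact mul_right_cancel h1
    have : classSize x ∣ classSize y := by
      rw [hXi, hYi]; exact Subgroup.index_dvd_of_le hle
    exact absurd (Nat.le_of_dvd hYpos this) (not_le.mpr hsize)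
  -- case analysis using distance ≥ 3
  have hcases : Nat.Coprime (classSize (x * y)) (classSize x) ∨
      Nat.Coprime (classSize (x * y)) (classSize y) := by
    by_contra hcon
    push_neg at hcon
    refine hdist.2 ⟨x * y, ht1, ht2⟩ ⟨And.intro ?_ (fun h => hcon.1 h.symm), And.intro ?_ hcon.2⟩
    · intro h
      have : x = x * y := congrArg Subtype.val h
      exact hy1 (by rwa [left_eq_mul] at this)
    · intro h
      have : x * y = y := congrArg Subtype.val h
      exact hx1 (by rwa [mul_eq_right] at this)
  have hteq : classSize (x * y) = classSize x := by
    rcases hcases with hc1 | hc2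
    · exfalso
      have : classSize (x * y) ∣ classSize y := hc1.dvd_of_dvd_mul_left htdvd
      have := Nat.le_of_dvd hYpos this
      omega
    · have : classSize (x * y) ∣ classSize x := hc2.dvd_of_dvd_mul_right htdvd
      have h1 := Nat.le_of_dvd (lt_of_le_of_lt (Nat.zero_le _) hsize) this
      omega
  -- hence A is the whole class of x*y
  have hAeq : A = classSet (x * y) := by
    apply Set.eq_of_subset_of_ncard_le hAsub _ (Set.toFinite _)
    rw [hAcard, ← hteq, classSize, Nat.card_coe_set_eq]
  -- z is a conjugate of y
  have hzY : z ∈ classSet y := mem_classSet_iff.mpr ⟨g, hz.symm⟩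
  -- the class of x is invariant under right multiplication by w = z*y⁻¹
  have hinv : ∀ v ∈ classSet x, v * (z * y⁻¹) ∈ classSet x := by
    intro v hv
    have : v * z ∈ classSet (x * y) := hXYt v hv z hzY
    rw [← hAeq] at this
    obtain ⟨u', hu', huz⟩ := this
    have huz' : u' * y = v * z := huz
    have hvw : v * (z * y⁻¹) = u' := by
      apply mul_right_cancel (b := y)
      rw [huz']; group
    rw [hvw]; exact hu'
  -- w commutes with y
  have hwy : Commute (z * y⁻¹) y := by
    have hu : g * x * g⁻¹ ∈ classSet x := mem_classSet_iff.mpr ⟨g, rfl⟩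
    have hm : (g * x * g⁻¹) * z ∈ classSet (x * y) := hXYt _ hu z hzY
    rw [← hAeq] at hm
    obtain ⟨u', hu', huz⟩ := hm
    have huz' : u' * y = (g * x * g⁻¹) * z := huz
    have h1 : Commute (g * x * g⁻¹) y := hXcomm _ hu
    have h2 : Commute u' y := hXcomm _ hu'
    have h3 : z * y⁻¹ = (g * x * g⁻¹)⁻¹ * u' := by
      apply mul_right_cancel (b := y)
      rw [mul_assoc _ u' y, huz']; group
    rw [h3]
    exact h1.inv_left.mul_left h2
  -- z commutes with y, and order bookkeeping
  have hzcy : Commute z y := by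
    have : z = (z * y⁻¹) * y := by group
    rw [this]
    exact hwy.mul_left (Commute.refl y)
  obtain ⟨b, hb⟩ := hyp
  have hoz : orderOf z = p ^ b := by
    rw [← hb]
    exact (SemiconjBy.orderOf_eq g (show SemiconjBy g y z by
      rw [SemiconjBy, hz]; group)).symm
  have hwne : z * y⁻¹ ≠ 1 := fun h => hzy (by rwa [mul_inv_eq_one] at h)
  have hord : orderOf (z * y⁻¹) ∣ p ^ (b + b) := by
    have := (hzcy.inv_right).orderOf_mul_dvd_mul_orderOf
    rwa [hoz, orderOf_inv, hb, ← pow_add] at this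
  obtain ⟨n, -, hn⟩ := (Nat.dvd_prime_pow hp).mp hord
  have hn0 : n ≠ 0 := by
    intro h
    rw [h, pow_zero, orderOf_eq_one_iff] at hn
    exact hwne hn
  have hdvd : orderOf (z * y⁻¹) ∣ classSize x :=
    orderOf_dvd_card_of_invariant (classSet x) (z * y⁻¹) hinv
  refine ⟨hwne, ⟨n, hn⟩, hwy, ?_⟩
  calc p ∣ p ^ n := dvd_pow_self p hn0
    _ = orderOf (z * y⁻¹) := hn.symm
    _ ∣ classSize x := hdvd
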